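/- Main theorem: Let G be an infinite, one-ended finitely generated group, A a finite set, and H a discrete group. Then every continuous cocycle c : G × A^G → H over the full shift is cohomologous to a homomorphism: there exist a homomorphism φ : G → H and a continuous function b : A^G → H such that c(g,x) = b(g·x) · φ(g) · b(x)⁻¹ for all g ∈ G and x ∈ A^G. -/

import Mathlib

/-- Word norm with respect to a generating set `S`. -/
noncomputable def wordNorm {G : Type*} [Group G] (S : Set G) (g : G) : ℕ :=
  sInf {n | ∃ w : List G, (∀ s ∈ w, s ∈ S) ∧ w.length = n ∧ w.prod = g}

/-- Left-invariant word metric. -/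
noncomputable def wdist {G : Type*} [Group G] (S : Set G) (g h : G) : ℕ :=
  wordNorm S (g⁻¹ * h)

/-- Two elements are connected outside the ball of radius r if some path of
unit steps joins them with all vertices of word norm > r. -/
def WConnected {G : Type*} [Group G] (S : Set G) (r : ℕ) (g g' : G) : Prop :=
  ∃ (n : ℕ) (γ : ℕ → G), γ 0 = g ∧ γ n = g' ∧
    (∀ j < n, wdist S (γ j) (γ (j + 1)) = 1) ∧
    (∀ j ≤ n, r < wordNorm S (γ j))

/-- g lies in an unbounded connected component of the Cayley graph minus the
ball of radius r. -/
def InUnbounded {G : Type*} [Group G] (S : Set G) (r : ℕ) (g : G) : Prop :=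
  ∀ M : ℕ, ∃ g' : G, WConnected S r g g' ∧ M < wordNorm S g'

section WordNorm

variable {G : Type*} [Group G] {S : Set G}

lemma wordNorm_le_of_word {w : List G} (hw : ∀ s ∈ w, s ∈ S) {g : G} (hp : w.prod = g) :
    wordNorm S g ≤ w.length :=
  Nat.sInf_le ⟨w, hw, rfl, hp⟩

variable (hsym : ∀ s ∈ S, s⁻¹ ∈ S) (hgen : Subgroup.closure S = ⊤)
include hsym hgen

lemma exists_word (g : G) : ∃ w : List G, (∀ s ∈ w, s ∈ S) ∧ w.prod = g := by
  have hg : g ∈ Subgroup.closure S := by rw [hgen]; trivial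
  refine Subgroup.closure_induction ?_ ?_ ?_ ?_ hg
  · exact fun x hx => ⟨[x], by simp [hx]⟩
  · exact ⟨[], by simp⟩
  · rintro x y _ _ ⟨w1, h1, p1⟩ ⟨w2, h2, p2⟩
    refine ⟨w1 ++ w2, ?_, by simp [p1, p2]⟩
    intro s hs
    rcases List.mem_append.1 hs with h | h
    · exact h1 s h
    · exact h2 s h
  · rintro x _ ⟨w, h, p⟩
    refine ⟨(w.map fun a => a⁻¹).reverse, ?_, ?_⟩
    · intro s hs
      rw [List.mem_reverse, List.mem_map] at hs
      obtain ⟨a, ha, rfl⟩ := hs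
      exact hsym a (h a ha)
    · rw [← List.prod_inv_reverse, p]

lemma exists_min_word (g : G) :
    ∃ w : List G, (∀ s ∈ w, s ∈ S) ∧ w.length = wordNorm S g ∧ w.prod = g := by
  have hne : {n | ∃ w : List G, (∀ s ∈ w, s ∈ S) ∧ w.length = n ∧ w.prod = g}.Nonempty := by
    obtain ⟨w, hw, hp⟩ := exists_word hsym hgen g
    exact ⟨w.length, w, hw, rfl, hp⟩
  have := Nat.sInf_mem hne
  obtain ⟨w, hw, hl, hp⟩ := this
  exact ⟨w, hw, hl, hp⟩

omit hsym hgen in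
lemma wordNorm_one : wordNorm S (1 : G) = 0 :=
  Nat.le_zero.1 (wordNorm_le_of_word (by simp) (List.prod_nil))

lemma eq_one_of_wordNorm_eq_zero {g : G} (h : wordNorm S g = 0) : g = 1 := by
  obtain ⟨w, hw, hl, hp⟩ := exists_min_word hsym hgen g
  rw [h, List.length_eq_zero_iff] at hl
  rw [← hp, hl, List.prod_nil]

lemma wordNorm_mul_le (a b : G) :
    wordNorm S (a * b) ≤ wordNorm S a + wordNorm S b := by
  obtain ⟨w1, hw1, hl1, hp1⟩ := exists_min_word hsym hgen a
  obtain ⟨w2, hw2, hl2, hp2⟩ := exists_min_word hsym hgen b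
  have : wordNorm S (a * b) ≤ (w1 ++ w2).length := by
    refine wordNorm_le_of_word ?_ (by simp [hp1, hp2])
    intro s hs
    rcases List.mem_append.1 hs with h | h
    · exact hw1 s h
    · exact hw2 s h
  simpa [hl1, hl2] using this

lemma wordNorm_inv (g : G) : wordNorm S g⁻¹ = wordNorm S g := by
  have key : ∀ a : G, wordNorm S a⁻¹ ≤ wordNorm S a := by
    intro a
    obtain ⟨w, hw, hl, hp⟩ := exists_min_word hsym hgen a
    have : wordNorm S a⁻¹ ≤ ((w.map fun x => x⁻¹).reverse).length := by
      refine wordNorm_le_of_word ?_ ?_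
      · intro s hs
        rw [List.mem_reverse, List.mem_map] at hs
        obtain ⟨x, hx, rfl⟩ := hs
        exact hsym x (hw x hx)
      · rw [← List.prod_inv_reverse, hp]
    simpa [hl] using this
  refine le_antisymm (key g) ?_
  have := key g⁻¹
  rwa [inv_inv] at this

omit hsym hgen in
lemma wordNorm_le_one_of_mem {s : G} (hs : s ∈ S) : wordNorm S s ≤ 1 :=
  wordNorm_le_of_word (w := [s]) (by simpa using hs) (by simp)

omit hsym hgen in
lemma mem_of_wordNorm_eq_one {u : G} (h : wordNorm S u = 1) : u ∈ S := by
  have hne : {n | ∃ w : List G, (∀ s ∈ w, s ∈ S) ∧ w.length = n ∧ w.prod = u}.Nonempty := by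
    by_contra h'
    rw [Set.not_nonempty_iff_eq_empty] at h'
    rw [wordNorm, h', Nat.sInf_empty] at h
    omega
  have hmem := Nat.sInf_mem hne
  rw [show sInf _ = wordNorm S u from rfl, h] at hmem
  obtain ⟨w, hw, hl, hp⟩ := hmem
  obtain ⟨a, rfl⟩ := List.length_eq_one_iff.1 hl
  rw [List.prod_singleton] at hp
  rw [← hp]
  exact hw a (by simp)

lemma ball_finite (hfin : S.Finite) (n : ℕ) : {g : G | wordNorm S g ≤ n}.Finite := by
  induction n with
  | zero =>
    refine Set.Finite.subset (Set.finite_singleton 1) ?_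
    intro g hg
    simp only [Set.mem_setOf_eq, Nat.le_zero] at hg
    simp [eq_one_of_wordNorm_eq_zero hsym hgen hg]
  | succ n ih =>
    refine Set.Finite.subset (ih.union (Set.Finite.image2 (· * ·) ih hfin)) ?_
    intro g hg
    simp only [Set.mem_setOf_eq] at hg
    obtain ⟨w, hw, hl, hp⟩ := exists_min_word hsym hgen g
    rcases List.eq_nil_or_concat' w with rfl | ⟨L, s, rfl⟩
    · left
      simp only [List.prod_nil] at hp
      simp [Set.mem_setOf_eq, ← hp, wordNorm_one]
    · right
      refine Set.mem_image2.2 ⟨L.prod, ?_, s, hw s (by simp), ?_⟩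
      · have hlen : L.length ≤ n := by
          simp only [List.length_append, List.length_singleton] at hl
          omega
        exact Set.mem_setOf_eq ▸ le_trans (wordNorm_le_of_word (fun t ht => hw t (by simp [ht])) rfl) hlen
      · simpa using hp

lemma exists_wordNorm_gt [Infinite G] (hfin : S.Finite) (M : ℕ) :
    ∃ g : G, M < wordNorm S g := by
  by_contra h
  push_neg at h
  have : (Set.univ : Set G).Finite := by
    refine Set.Finite.subset (ball_finite hsym hgen hfin M) ?_
    intro g _
    exact h g
  exact Set.infinite_univ this

omit hsym hgen in
lemma wdist_comm' (hsym : ∀ s ∈ S, s⁻¹ ∈ S) (hgen : Subgroup.closure S = ⊤) (g h : G) :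
    wdist S g h = wdist S h g := by
  unfold wdist
  rw [← wordNorm_inv hsym hgen (g⁻¹ * h)]
  simp [mul_inv_rev]

end WordNorm

section Geometry

variable {G : Type*} [Group G] {S : Set G}
  (hsym : ∀ s ∈ S, s⁻¹ ∈ S) (hgen : Subgroup.closure S = ⊤)

include hsym hgen in
lemma wconnected_symm {r : ℕ} {g g' : G} (h : WConnected S r g g') : WConnected S r g' g := by
  obtain ⟨n, γ, h0, hn, hstep, hnorm⟩ := h
  refine ⟨n, fun j => γ (n - j), by simpa using hn, by simpa using h0, ?_, ?_⟩
  · intro j hj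
    show wdist S (γ (n - j)) (γ (n - (j + 1))) = 1
    rw [wdist_comm' hsym hgen, show n - j = (n - (j + 1)) + 1 by omega]
    exact hstep (n - (j + 1)) (by omega)
  · intro j hj
    show r < wordNorm S (γ (n - j))
    exact hnorm (n - j) (by omega)

lemma wconnected_trans {r : ℕ} {a b cc : G} (h1 : WConnected S r a b)
    (h2 : WConnected S r b cc) : WConnected S r a cc := by
  obtain ⟨n, γ, hγ0, hγn, hγs, hγb⟩ := h1
  obtain ⟨m, δ, hδ0, hδm, hδs, hδb⟩ := h2
  classical
  set ε : ℕ → G := fun j => if j < n then γ j else δ (j - n) with hε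
  have hval : ∀ j ≤ n, ε j = γ j := by
    intro j hj
    by_cases h : j < n
    · simp [hε, h]
    · have hjn : j = n := by omega
      simp [hε, hjn, hδ0, hγn]
  have hval2 : ∀ j, n ≤ j → ε j = δ (j - n) := by
    intro j hj
    by_cases h : j < n
    · exact absurd h (by omega)
    · simp [hε, h]
  refine ⟨n + m, ε, by rw [hval 0 (by omega), hγ0],
    by rw [hval2 (n + m) (by omega)]; simpa using hδm, ?_, ?_⟩
  · intro j hj
    by_cases h : j < n
    · rw [hval j (by omega), hval (j + 1) (by omega)]
      exact hγs j h
    · rw [hval2 j (by omega), hval2 (j + 1) (by omega),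
        show j + 1 - n = (j - n) + 1 by omega]
      exact hδs (j - n) (by omega)
  · intro j hj
    by_cases h : j < n
    · rw [hval j (by omega)]; exact hγb j (by omega)
    · rw [hval2 j (by omega)]; exact hδb (j - n) (by omega)

lemma inUnbounded_of_wconnected {r : ℕ} {a b : G} (h : WConnected S r a b)
    (hb : InUnbounded S r b) : InUnbounded S r a := by
  intro M
  obtain ⟨g', hg', hM⟩ := hb M
  exact ⟨g', wconnected_trans h hg', hM⟩

include hsym hgen in
/-- From any point outside the ball of radius T there is a path staying outside
the ball reaching a point on the sphere of radius T+1. -/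
lemma exists_sphere_connection (T : ℕ) {h : G} (hh : T < wordNorm S h) :
    ∃ p : G, wordNorm S p = T + 1 ∧ WConnected S T h p := by
  classical
  obtain ⟨w0, hw0, hp0⟩ := exists_word hsym hgen h
  -- filter out identity letters
  have hfilter : ∀ (w : List G), (∀ s ∈ w, s ∈ S) →
      ∃ w' : List G, (∀ s ∈ w', s ∈ S ∧ s ≠ 1) ∧ w'.prod = w.prod := by
    intro w
    induction w with
    | nil => exact fun _ => ⟨[], by simp, by simp⟩
    | cons a l ih =>
      intro hmem
      obtain ⟨w', hw', hp'⟩ := ih (fun s hs => hmem s (by simp [hs]))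
      by_cases ha : a = 1
      · exact ⟨w', hw', by simp [hp', ha]⟩
      · exact ⟨a :: w', by
          intro s hs
          rcases List.mem_cons.1 hs with rfl | hs
          · exact ⟨hmem s (by simp), ha⟩
          · exact hw' s hs, by simp [hp']⟩
  obtain ⟨w, hw, hp⟩ := hfilter w0 hw0
  rw [hp0] at hp
  set m := w.length with hm
  set γ : ℕ → G := fun j => (w.take (m - j)).prod with hγ
  have hγ0 : γ 0 = h := by
    show (w.take (m - 0)).prod = h
    rw [Nat.sub_zero, hm, List.take_length, hp]
  have hγm : γ m = 1 := by
    show (w.take (m - m)).prod = 1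
    rw [Nat.sub_self, List.take_zero, List.prod_nil]
  -- step decomposition
  have hdec : ∀ j < m, ∃ s : G, s ∈ S ∧ s ≠ 1 ∧ γ j = γ (j + 1) * s := by
    intro j hj
    obtain ⟨i, hi, h1, h2⟩ : ∃ i, i < w.length ∧ m - j = i + 1 ∧ m - (j + 1) = i :=
      ⟨m - j - 1, by omega, by omega, by omega⟩
    refine ⟨w.get ⟨i, hi⟩, (hw _ (List.get_mem w ⟨i, hi⟩)).1,
      (hw _ (List.get_mem w ⟨i, hi⟩)).2, ?_⟩
    show (w.take (m - j)).prod = (w.take (m - (j + 1))).prod * w.get ⟨i, hi⟩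
    rw [h1, h2]
    exact List.prod_take_succ w i hi
  have hstep : ∀ j < m, wdist S (γ j) (γ (j + 1)) = 1 := by
    intro j hj
    obtain ⟨s, hsS, hs1, hdecj⟩ := hdec j hj
    have : (γ j)⁻¹ * γ (j + 1) = s⁻¹ := by rw [hdecj]; group
    rw [wdist, this, wordNorm_inv hsym hgen]
    have hle := wordNorm_le_one_of_mem hsS
    have hne : wordNorm S s ≠ 0 := fun h0 => hs1 (eq_one_of_wordNorm_eq_zero hsym hgen h0)
    omega
  have hlip : ∀ j < m, wordNorm S (γ j) ≤ wordNorm S (γ (j + 1)) + 1 := by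
    intro j hj
    obtain ⟨s, hsS, _, hdecj⟩ := hdec j hj
    rw [hdecj]
    exact le_trans (wordNorm_mul_le hsym hgen _ _)
      (by have := wordNorm_le_one_of_mem hsS; omega)
  -- first index entering the ball
  have hex : ∃ j, wordNorm S (γ j) ≤ T := ⟨m, by simp [hγm, wordNorm_one]⟩
  set j₀ := Nat.find hex with hj₀
  have hspec : wordNorm S (γ j₀) ≤ T := Nat.find_spec hex
  have hmin : ∀ j < j₀, T < wordNorm S (γ j) := fun j hj => by
    have := Nat.find_min hex hj; omega
  have hj₀pos : 1 ≤ j₀ := by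
    rcases Nat.eq_zero_or_pos j₀ with h0 | h0
    · rw [h0] at hspec; rw [hγ0] at hspec; omega
    · exact h0
  have hj₀m : j₀ ≤ m := by
    refine Nat.find_le ?_
    simp [hγm, wordNorm_one]
  refine ⟨γ (j₀ - 1), ?_, ?_⟩
  · have h1 : T < wordNorm S (γ (j₀ - 1)) := hmin _ (by omega)
    have h2 : wordNorm S (γ (j₀ - 1)) ≤ wordNorm S (γ j₀) + 1 := by
      have := hlip (j₀ - 1) (by omega)
      rwa [show j₀ - 1 + 1 = j₀ by omega] at this
    omega
  · exact ⟨j₀ - 1, γ, hγ0, rfl, fun j hj => hstep j (by omega),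
      fun j hj => hmin j (by omega)⟩

include hsym hgen in
/-- Uniform threshold beyond which every element lies in an unbounded component. -/
lemma exists_unbounded_threshold (hfin : S.Finite) (T : ℕ) :
    ∃ M : ℕ, T ≤ M ∧ ∀ h : G, M < wordNorm S h → InUnbounded S T h := by
  classical
  set P : Set G := {p | wordNorm S p = T + 1} with hP
  have hPfin : P.Finite := (ball_finite hsym hgen hfin (T + 1)).subset
    (fun p hp => by simp only [hP, Set.mem_setOf_eq] at hp ⊢; omega)
  have hQ : ∀ p : G, ¬ InUnbounded S T p →
      ∃ M0, ∀ g', WConnected S T p g' → wordNorm S g' ≤ M0 := by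
    intro p hp
    unfold InUnbounded at hp
    push_neg at hp
    obtain ⟨M0, hM0⟩ := hp
    exact ⟨M0, fun g' hg' => hM0 g' hg'⟩
  set Q : G → ℕ := fun p => if hp : InUnbounded S T p then 0 else (hQ p hp).choose with hQdef
  set M := T + hPfin.toFinset.sup Q with hM
  refine ⟨M, by omega, ?_⟩
  intro h hh
  obtain ⟨p, hpnorm, hconn⟩ := exists_sphere_connection hsym hgen T (h := h) (by omega)
  have hpP : p ∈ P := hpnorm
  by_cases hp : InUnbounded S T p
  · exact inUnbounded_of_wconnected hconn hp
  · exfalso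
    have hQp : ∀ g', WConnected S T p g' → wordNorm S g' ≤ Q p := by
      intro g' hg'
      have : Q p = (hQ p hp).choose := by rw [hQdef]; simp [hp]
      rw [this]
      exact (hQ p hp).choose_spec g' hg'
    have hle : wordNorm S h ≤ Q p := hQp h (wconnected_symm hsym hgen hconn)
    have hsup : Q p ≤ hPfin.toFinset.sup Q :=
      Finset.le_sup (hPfin.mem_toFinset.2 hpP)
    omega

include hsym hgen in
/-- An avoiding path from `g⁻¹` to `1` staying far from `k`. -/
lemma exists_avoiding_path
    (hOneEnd : ∀ r : ℕ, ∃ g₀ : G, InUnbounded S r g₀ ∧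
      ∀ g : G, InUnbounded S r g → WConnected S r g g₀)
    {T M : ℕ} (hM : ∀ h : G, M < wordNorm S h → InUnbounded S T h)
    (g k : G) (hk : M < wordNorm S k) (hgk : M < wdist S g⁻¹ k) :
    ∃ (n : ℕ) (γ : ℕ → G), γ 0 = g⁻¹ ∧ γ n = 1 ∧
      (∀ j < n, wdist S (γ j) (γ (j + 1)) = 1) ∧
      (∀ j ≤ n, T < wdist S k (γ j)) := by
  have ha : M < wordNorm S (k⁻¹ * g⁻¹) := by
    rwa [show wordNorm S (k⁻¹ * g⁻¹) = wdist S g⁻¹ k from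
      by rw [wdist, ← wordNorm_inv hsym hgen]; simp [mul_inv_rev]]
  have hb : M < wordNorm S k⁻¹ := by rwa [wordNorm_inv hsym hgen]
  obtain ⟨g₀, hg₀, hhub⟩ := hOneEnd T
  have hconn : WConnected S T (k⁻¹ * g⁻¹) k⁻¹ :=
    wconnected_trans (hhub _ (hM _ ha)) (wconnected_symm hsym hgen (hhub _ (hM _ hb)))
  obtain ⟨n, δ, hδ0, hδn, hδs, hδb⟩ := hconn
  refine ⟨n, fun j => k * δ j, by show k * δ 0 = g⁻¹; rw [hδ0]; group,
    by show k * δ n = 1; rw [hδn]; group, ?_, ?_⟩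
  · intro j hj
    have : wdist S (k * δ j) (k * δ (j + 1)) = wdist S (δ j) (δ (j + 1)) := by
      unfold wdist; congr 1; group
    rw [this]; exact hδs j hj
  · intro j hj
    have : wdist S k (k * δ j) = wordNorm S (δ j) := by
      unfold wdist; congr 1; group
    rw [this]; exact hδb j hj

end Geometry

section Window

/-- A continuous function from a product of finite discrete spaces to a discrete
space depends on finitely many coordinates. -/
lemma exists_finite_window {ι : Type*} {A : Type*} [Finite A] [TopologicalSpace A]
    [DiscreteTopology A] {H : Type*} [TopologicalSpace H] [DiscreteTopology H]
    (f : (ι → A) → H) (hf : Continuous f) :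
    ∃ W : Set ι, W.Finite ∧ ∀ x y : ι → A, (∀ k ∈ W, x k = y k) → f x = f y := by
  classical
  have hcyl : ∀ x : ι → A, ∃ I : Set ι, I.Finite ∧
      ∀ y, (∀ i ∈ I, y i = x i) → f y = f x := by
    intro x
    have hmem : f ⁻¹' {f x} ∈ nhds x :=
      hf.continuousAt.preimage_mem_nhds (by rw [mem_nhds_discrete]; exact rfl)
    rw [nhds_pi, Filter.mem_pi] at hmem
    obtain ⟨I, hIfin, t, ht, hsub⟩ := hmem
    refine ⟨I, hIfin, fun y hy => ?_⟩
    have : y ∈ Set.pi I t := by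
      intro i hi
      rw [hy i hi]
      exact mem_of_mem_nhds (ht i)
    exact hsub this
  choose Ifun hIfin hIspec using hcyl
  have hopen : ∀ x : ι → A, IsOpen {y : ι → A | ∀ i ∈ Ifun x, y i = x i} := by
    intro x
    have he : {y : ι → A | ∀ i ∈ Ifun x, y i = x i}
        = Set.pi (Ifun x) (fun i => {x i}) := by
      ext y; simp [Set.mem_pi]
    rw [he]
    exact isOpen_set_pi (hIfin x) (fun a _ => isOpen_discrete _)
  have hcover : (Set.univ : Set (ι → A)) ⊆ ⋃ x, {y : ι → A | ∀ i ∈ Ifun x, y i = x i} :=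
    fun x _ => Set.mem_iUnion.2 ⟨x, fun i _ => rfl⟩
  obtain ⟨F, hF⟩ := isCompact_univ.elim_finite_subcover _ hopen hcover
  refine ⟨⋃ x ∈ F, Ifun x, F.finite_toSet.biUnion (fun x _ => hIfin x), ?_⟩
  intro x y hxy
  obtain ⟨x₀, hx₀F, hx₀⟩ : ∃ x₀ ∈ F, ∀ i ∈ Ifun x₀, x i = x₀ i := by
    have hx := hF (Set.mem_univ x)
    rw [Set.mem_iUnion₂] at hx
    obtain ⟨x₀, hx₀F, hx₀⟩ := hx
    exact ⟨x₀, hx₀F, hx₀⟩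
  have hy : ∀ i ∈ Ifun x₀, y i = x₀ i := fun i hi =>
    ((hxy i (Set.mem_biUnion hx₀F hi)).symm).trans (hx₀ i hi)
  exact (hIspec x₀ x hx₀).trans (hIspec x₀ y hy).symm

end Window

section Cocycle

variable {G : Type*} [Group G] {A : Type*} {H : Type*} [Group H]
  {S : Set G} (c : G → (G → A) → H)
  (hcoc : ∀ (g h : G) (x : G → A),
    c (g * h) x = c g (fun k => x (h⁻¹ * k)) * c h x)

include hcoc in
lemma cocycle_one (x : G → A) : c 1 x = 1 := by
  have h := hcoc 1 1 x
  simp only [one_mul, inv_one] at h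
  exact (mul_eq_left.1 h.symm)

include hcoc in
/-- Cocycle values can be computed along a unit-step path ending at 1; if two
configurations agree on a `T`-neighbourhood of all the path vertices (except
the start), the cocycle values agree. -/
lemma cocycle_path_invariance (T : ℕ)
    (hwin : ∀ s ∈ S, ∀ u v : G → A, (∀ k, wordNorm S k ≤ T → u k = v k) → c s u = c s v) :
    ∀ (n : ℕ) (γ : ℕ → G), γ n = 1 → (∀ j < n, wdist S (γ j) (γ (j + 1)) = 1) →
    ∀ x y : G → A, (∀ j : G, x j ≠ y j → ∀ i, 1 ≤ i → i ≤ n → T < wdist S (γ i) j) →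
    c (γ 0)⁻¹ x = c (γ 0)⁻¹ y := by
  intro n
  induction n with
  | zero =>
    intro γ h0 _ x y _
    rw [h0, inv_one, cocycle_one c hcoc, cocycle_one c hcoc]
  | succ n ih =>
    intro γ hend hstep x y havoid
    have hu : (γ 0)⁻¹ * γ 1 ∈ S := by
      refine mem_of_wordNorm_eq_one ?_
      exact hstep 0 (by omega)
    have hdecomp : (γ 0)⁻¹ = ((γ 0)⁻¹ * γ 1) * (γ 1)⁻¹ := by group
    have hx := hcoc ((γ 0)⁻¹ * γ 1) (γ 1)⁻¹ x
    have hy := hcoc ((γ 0)⁻¹ * γ 1) (γ 1)⁻¹ y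
    rw [← hdecomp] at hx hy
    rw [hx, hy, inv_inv]
    have htail : c (γ 1)⁻¹ x = c (γ 1)⁻¹ y := by
      have := ih (fun j => γ (j + 1)) hend
        (fun j hj => hstep (j + 1) (by omega)) x y
        (fun j hj i hi1 hi2 => havoid j hj (i + 1) (by omega) (by omega))
      simpa using this
    rw [htail]
    congr 1
    refine hwin _ hu _ _ ?_
    intro k hk
    by_contra hne
    have := havoid (γ 1 * k) hne 1 (le_refl 1) (by omega)
    have heq : wdist S (γ 1) (γ 1 * k) = wordNorm S k := by
      unfold wdist; congr 1; group
    rw [heq] at this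
    omega

end Cocycle

section KeyLocality

variable {G : Type*} [Group G] {A : Type*} {H : Type*} [Group H] {S : Set G}

/-- Key locality lemma: the cocycle value `c g x` depends only on the values of
`x` on large balls around `1` and `g⁻¹`. -/
lemma key_locality
    (hsym : ∀ s ∈ S, s⁻¹ ∈ S) (hgen : Subgroup.closure S = ⊤)
    (hOneEnd : ∀ r : ℕ, ∃ g₀ : G, InUnbounded S r g₀ ∧
      ∀ g : G, InUnbounded S r g → WConnected S r g g₀)
    (c : G → (G → A) → H)
    (hcoc : ∀ (g h : G) (x : G → A),
      c (g * h) x = c g (fun k => x (h⁻¹ * k)) * c h x)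
    {T M : ℕ}
    (hM : ∀ h : G, M < wordNorm S h → InUnbounded S T h)
    (hwin : ∀ s ∈ S, ∀ u v : G → A, (∀ k, wordNorm S k ≤ T → u k = v k) → c s u = c s v)
    (g : G) (Wg : Set G) (hWgfin : Wg.Finite)
    (hWg : ∀ x y : G → A, (∀ k ∈ Wg, x k = y k) → c g x = c g y)
    (x y : G → A)
    (h1 : ∀ j : G, wordNorm S j ≤ M → x j = y j)
    (h2 : ∀ j : G, wdist S g⁻¹ j ≤ M → x j = y j) :
    c g x = c g y := by
  classical
  have hsingle : ∀ (u v : G → A) (a : G), M < wordNorm S a → M < wdist S g⁻¹ a →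
      (∀ j, j ≠ a → u j = v j) → c g u = c g v := by
    intro u v a hanorm hadist hagree
    obtain ⟨n, γ, hγ0, hγn, hγs, hγb⟩ :=
      exists_avoiding_path hsym hgen hOneEnd hM g a hanorm hadist
    have key := cocycle_path_invariance c hcoc T hwin n γ hγn hγs u v ?_
    · rwa [hγ0, inv_inv] at key
    · intro j hj i hi1 hi2
      have hja : j = a := by
        by_contra h; exact hj (hagree j h)
      subst hja
      have := hγb i hi2
      rwa [wdist_comm' hsym hgen] at this
  set y' : G → A := fun j => if j ∈ Wg then y j else x j with hy'
  have hcy' : c g y' = c g y := hWg y' y (fun k hk => by simp [hy', hk])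
  have hfar : ∀ j, x j ≠ y' j → M < wordNorm S j ∧ M < wdist S g⁻¹ j := by
    intro j hj
    have hjW : j ∈ Wg := by
      by_contra h
      exact hj (by simp [hy', h])
    have hxy : x j ≠ y j := by simpa [hy', hjW] using hj
    constructor
    · by_contra h; push_neg at h; exact hxy (h1 j h)
    · by_contra h; push_neg at h; exact hxy (h2 j h)
  have main : ∀ (D : Finset G) (u v : G → A),
      (∀ j, u j ≠ v j → j ∈ D) →
      (∀ j, u j ≠ v j → M < wordNorm S j ∧ M < wdist S g⁻¹ j) →
      c g u = c g v := by
    intro D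
    induction D using Finset.induction_on with
    | empty =>
      intro u v hsub _
      have : u = v := funext fun j => by
        by_contra h
        exact absurd (hsub j h) (Finset.notMem_empty j)
      rw [this]
    | @insert a D' ha ih =>
      intro u v hsub hfar'
      by_cases hav : u a = v a
      · refine ih u v ?_ hfar'
        intro j hj
        rcases Finset.mem_insert.1 (hsub j hj) with rfl | h
        · exact absurd hav hj
        · exact h
      · set mid : G → A := fun j => if j = a then v j else u j with hmid
        have step1 : c g u = c g mid :=
          hsingle u mid a (hfar' a hav).1 (hfar' a hav).2
            (fun j hj => by simp [hmid, hj])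
        have step2 : c g mid = c g v := by
          refine ih mid v ?_ ?_
          · intro j hj
            have hja : j ≠ a := by
              intro h; subst h
              exact hj (by simp [hmid])
            have : u j ≠ v j := by simpa [hmid, hja] using hj
            rcases Finset.mem_insert.1 (hsub j this) with h | h
            · exact absurd h hja
            · exact h
          · intro j hj
            have hja : j ≠ a := by
              intro h; subst h
              exact hj (by simp [hmid])
            exact hfar' j (by simpa [hmid, hja] using hj)
        rw [step1, step2]
  have hxy' : c g x = c g y' := by
    refine main hWgfin.toFinset x y' ?_ hfar
    intro j hj
    rw [Set.Finite.mem_toFinset]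
    by_contra h
    exact hj (by simp [hy', h])
  rw [hxy', hcy']

end KeyLocality

section GeneratorCase

variable {G : Type*} [Group G] {A : Type*} {H : Type*} [Group H] {S : Set G}

lemma generator_case
    (hsym : ∀ s ∈ S, s⁻¹ ∈ S) (hgen : Subgroup.closure S = ⊤)
    (c : G → (G → A) → H)
    (hcoc : ∀ (g h : G) (x : G → A),
      c (g * h) x = c g (fun k => x (h⁻¹ * k)) * c h x)
    {a₀ : A} {T M N : ℕ} (hTM : T ≤ M) (hN : N = M + 1)
    (hwin : ∀ s ∈ S, ∀ u v : G → A, (∀ k, wordNorm S k ≤ T → u k = v k) → c s u = c s v)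
    (KL : ∀ (g : G) (x y : G → A),
      (∀ j : G, wordNorm S j ≤ M → x j = y j) →
      (∀ j : G, wdist S g⁻¹ j ≤ M → x j = y j) → c g x = c g y)
    {h₁ : G} (hh₁ : N + M + 1 < wordNorm S h₁)
    (s : G) (hs : s ∈ S) (x : G → A) :
    c s x = (c h₁ (fun j => if wordNorm S j ≤ N then x (s⁻¹ * j) else a₀))⁻¹
      * c h₁ (fun _ => a₀) * c s (fun _ => a₀)
      * ((c h₁ (fun j => if wordNorm S j ≤ N then x j else a₀))⁻¹
          * c h₁ (fun _ => a₀))⁻¹ := by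
  classical
  have trX : ∀ p q : G, wordNorm S (p * q) ≤ wordNorm S p + wordNorm S q :=
    wordNorm_mul_le hsym hgen
  have hinv : ∀ p : G, wordNorm S p⁻¹ = wordNorm S p := wordNorm_inv hsym hgen
  have hs1 : wordNorm S s ≤ 1 := wordNorm_le_one_of_mem hs
  set x₀ : G → A := fun _ => a₀ with hx₀def
  set z : G → A := fun j => if wordNorm S j ≤ N then x j else a₀ with hzdef
  set yy : G → A := fun j => if wordNorm S j ≤ N then x (s⁻¹ * j) else a₀ with hyydef
  have hzj : ∀ j, z j = if wordNorm S j ≤ N then x j else a₀ := fun j => by rw [hzdef]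
  have hyyj : ∀ j, yy j = if wordNorm S j ≤ N then x (s⁻¹ * j) else a₀ :=
    fun j => by rw [hyydef]
  have hx₀j : ∀ j, x₀ j = a₀ := fun j => by rw [hx₀def]
  have hshift : ∀ h : G, (fun k => x₀ (h⁻¹ * k)) = x₀ := by
    intro h; funext k; simp [hx₀def]
  -- geometric estimates
  have hA : ∀ j : G, wordNorm S j ≤ M → ¬ (wordNorm S (h₁⁻¹ * j) ≤ N) := by
    intro j hj hcon
    have e : j * (h₁⁻¹ * j)⁻¹ = h₁ := by group
    have t := trX j (h₁⁻¹ * j)⁻¹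
    rw [e, hinv] at t
    omega
  have hB : ∀ j : G, wordNorm S (h₁ * s * h₁⁻¹ * j) ≤ M →
      ¬ (wordNorm S (h₁⁻¹ * j) ≤ N) := by
    intro j hj hcon
    have t1 := trX (h₁ * s * h₁⁻¹ * j) (h₁⁻¹ * j)⁻¹
    have t2 := trX (h₁ * s * h₁⁻¹ * j * (h₁⁻¹ * j)⁻¹) s⁻¹
    rw [show h₁ * s * h₁⁻¹ * j * (h₁⁻¹ * j)⁻¹ * s⁻¹ = h₁ by group] at t2
    rw [hinv] at t1 t2
    omega
  have hC : ∀ j : G, wordNorm S j ≤ M → wordNorm S (s⁻¹ * j) ≤ N := by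
    intro j hj
    have t := trX s⁻¹ j
    rw [hinv] at t
    omega
  have hD : ∀ j : G, wordNorm S (h₁ * j) ≤ M →
      ¬ (wordNorm S j ≤ N) ∧ ¬ (wordNorm S (s⁻¹ * j) ≤ N) := by
    intro j hj
    have t1 := trX (h₁ * j) j⁻¹
    rw [show h₁ * j * j⁻¹ = h₁ by group, hinv] at t1
    have t2 := trX s (s⁻¹ * j)
    rw [show s * (s⁻¹ * j) = j by group] at t2
    constructor <;> omega
  -- cocycle computations
  have E1 : c (h₁ * s) x₀ = c h₁ x₀ * c s x₀ := by
    have h0 := hcoc h₁ s x₀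
    rwa [hshift s] at h0
  have E2 : c (h₁ * s) x₀ = c (h₁ * s * h₁⁻¹) x₀ * c h₁ x₀ := by
    have h0 := hcoc (h₁ * s * h₁⁻¹) h₁ x₀
    rw [hshift h₁] at h0
    rwa [show h₁ * s * h₁⁻¹ * h₁ = h₁ * s by group] at h0
  have E3 : c (h₁ * s * h₁⁻¹) (fun k => z (h₁⁻¹ * k)) = c (h₁ * s * h₁⁻¹) x₀ := by
    refine KL (h₁ * s * h₁⁻¹) _ _ ?_ ?_
    · intro j hj
      show z (h₁⁻¹ * j) = x₀ j
      rw [hzj (h₁⁻¹ * j), hx₀j j, if_neg (hA j hj)]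
    · intro j hj
      unfold wdist at hj
      rw [inv_inv] at hj
      show z (h₁⁻¹ * j) = x₀ j
      rw [hzj (h₁⁻¹ * j), hx₀j j, if_neg (hB j hj)]
  have E4 : c (h₁ * s) z = c (h₁ * s * h₁⁻¹) (fun k => z (h₁⁻¹ * k)) * c h₁ z := by
    have h0 := hcoc (h₁ * s * h₁⁻¹) h₁ z
    rwa [show h₁ * s * h₁⁻¹ * h₁ = h₁ * s by group] at h0
  have E5 : c (h₁ * s) z = c h₁ (fun k => z (s⁻¹ * k)) * c s z := hcoc h₁ s z
  have E6 : c h₁ (fun k => z (s⁻¹ * k)) = c h₁ yy := by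
    refine KL h₁ _ _ ?_ ?_
    · intro j hj
      show z (s⁻¹ * j) = yy j
      rw [hzj (s⁻¹ * j), hyyj j, if_pos (hC j hj), if_pos (by omega : wordNorm S j ≤ N)]
    · intro j hj
      unfold wdist at hj
      rw [inv_inv] at hj
      show z (s⁻¹ * j) = yy j
      rw [hzj (s⁻¹ * j), hyyj j, if_neg (hD j hj).2, if_neg (hD j hj).1]
  have E7 : c s z = c s x := by
    refine hwin s hs z x ?_
    intro k hk
    rw [hzj k, if_pos (by omega : wordNorm S k ≤ N)]
  have step : c h₁ x₀ * c s x₀ * (c h₁ x₀)⁻¹ * c h₁ z = c h₁ yy * c s x := by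
    calc c h₁ x₀ * c s x₀ * (c h₁ x₀)⁻¹ * c h₁ z
        = c (h₁ * s) x₀ * (c h₁ x₀)⁻¹ * c h₁ z := by rw [← E1]
      _ = c (h₁ * s * h₁⁻¹) x₀ * c h₁ x₀ * (c h₁ x₀)⁻¹ * c h₁ z := by rw [E2]
      _ = c (h₁ * s * h₁⁻¹) x₀ * c h₁ z := by group
      _ = c (h₁ * s * h₁⁻¹) (fun k => z (h₁⁻¹ * k)) * c h₁ z := by rw [E3]
      _ = c (h₁ * s) z := E4.symm
      _ = c h₁ (fun k => z (s⁻¹ * k)) * c s z := E5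
      _ = c h₁ yy * c s x := by rw [E6, E7]
  calc c s x = (c h₁ yy)⁻¹ * (c h₁ yy * c s x) := by group
    _ = (c h₁ yy)⁻¹ * (c h₁ x₀ * c s x₀ * (c h₁ x₀)⁻¹ * c h₁ z) := by rw [← step]
    _ = (c h₁ yy)⁻¹ * c h₁ x₀ * c s x₀ * ((c h₁ z)⁻¹ * c h₁ x₀)⁻¹ := by group

end GeneratorCase

/-- Main theorem: over a one-ended group, every continuous cocycle on the full
shift with values in a discrete group is cohomologous to a homomorphism. -/
theorem continuous_cocycle_rigidity {G : Type*} [Group G] [Infinite G]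
    {A : Type*} [Finite A] [TopologicalSpace A] [DiscreteTopology A]
    {H : Type*} [Group H] [TopologicalSpace H] [DiscreteTopology H]
    (S : Set G) (hfin : S.Finite) (hsym : ∀ s ∈ S, s⁻¹ ∈ S)
    (hgen : Subgroup.closure S = ⊤)
    (hOneEnd : ∀ r : ℕ, ∃ g₀ : G, InUnbounded S r g₀ ∧
      ∀ g : G, InUnbounded S r g → WConnected S r g g₀)
    (c : G → (G → A) → H) (hcont : ∀ g : G, Continuous (c g))
    (hcoc : ∀ (g h : G) (x : G → A),
      c (g * h) x = c g (fun k => x (h⁻¹ * k)) * c h x) :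
    ∃ (φ : G →* H) (b : (G → A) → H), Continuous b ∧
      ∀ (g : G) (x : G → A), c g x = b (fun k => x (g⁻¹ * k)) * φ g * (b x)⁻¹ := by
  classical
  rcases isEmpty_or_nonempty A with hA | hA
  · exact ⟨1, fun _ => 1, continuous_const, fun g x => (hA.false (x 1)).elim⟩
  obtain ⟨a₀⟩ := hA
  have hc1 : ∀ x : G → A, c 1 x = 1 := cocycle_one c hcoc
  have hshift : ∀ h : G, (fun k => (fun _ : G => a₀) (h⁻¹ * k)) = (fun _ : G => a₀) :=
    fun h => rfl
  have hφmul : ∀ g h : G,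
      c (g * h) (fun _ => a₀) = c g (fun _ => a₀) * c h (fun _ => a₀) := by
    intro g h
    have h0 := hcoc g h (fun _ => a₀)
    rwa [hshift h] at h0
  set φ : G →* H := MonoidHom.mk' (fun g => c g (fun _ => a₀)) hφmul with hφdef
  have hφ : ∀ g : G, φ g = c g (fun _ => a₀) := fun g => rfl
  -- windows for the cocycle maps
  choose Wf hWfin hWspec using fun g : G => exists_finite_window (c g) (hcont g)
  set E : Set G := ⋃ s ∈ S, Wf s with hE
  have hEfin : E.Finite := hfin.biUnion (fun s _ => hWfin s)
  set T : ℕ := hEfin.toFinset.sup (wordNorm S) with hT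
  have hwin : ∀ s ∈ S, ∀ u v : G → A,
      (∀ k, wordNorm S k ≤ T → u k = v k) → c s u = c s v := by
    intro s hs u v huv
    refine hWspec s u v (fun k hk => huv k ?_)
    exact Finset.le_sup (hEfin.mem_toFinset.2 (Set.mem_biUnion hs hk))
  obtain ⟨M, hTM, hM⟩ := exists_unbounded_threshold hsym hgen hfin T
  have KL : ∀ (g : G) (x y : G → A),
      (∀ j : G, wordNorm S j ≤ M → x j = y j) →
      (∀ j : G, wdist S g⁻¹ j ≤ M → x j = y j) → c g x = c g y :=
    fun g x y h1 h2 => key_locality hsym hgen hOneEnd c hcoc hM hwin g (Wf g)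
      (hWfin g) (hWspec g) x y h1 h2
  set N : ℕ := M + 1 with hNdef
  obtain ⟨h₁, hh₁⟩ := exists_wordNorm_gt hsym hgen hfin (N + M + 1)
  set b : (G → A) → H :=
    fun X => (c h₁ (fun j => if wordNorm S j ≤ N then X j else a₀))⁻¹
      * c h₁ (fun _ => a₀) with hbdef
  have hbX : ∀ X : G → A,
      b X = (c h₁ (fun j => if wordNorm S j ≤ N then X j else a₀))⁻¹
        * c h₁ (fun _ => a₀) := fun X => rfl
  have hbcont : Continuous b := by
    have hloc : IsLocallyConstant b := by
      rw [IsLocallyConstant.iff_exists_open]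
      intro x
      refine ⟨{y : G → A | ∀ j ∈ (ball_finite hsym hgen hfin N).toFinset, y j = x j},
        ?_, ?_, ?_⟩
      · have he : {y : G → A | ∀ j ∈ (ball_finite hsym hgen hfin N).toFinset, y j = x j}
            = Set.pi ((ball_finite hsym hgen hfin N).toFinset : Set G) (fun j => {x j}) := by
          ext y; simp [Set.mem_pi]
        rw [he]
        exact isOpen_set_pi (Finset.finite_toSet _) (fun a _ => isOpen_discrete _)
      · intro j _; rfl
      · intro y hy
        have harg : (fun j => if wordNorm S j ≤ N then y j else a₀)
            = (fun j => if wordNorm S j ≤ N then x j else a₀) := by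
          funext j
          by_cases hj : wordNorm S j ≤ N
          · rw [if_pos hj, if_pos hj,
              hy j ((Set.Finite.mem_toFinset _).2 (by exact hj))]
          · rw [if_neg hj, if_neg hj]
        rw [hbX y, hbX x, harg]
    exact hloc.continuous
  refine ⟨φ, b, hbcont, ?_⟩
  intro g x
  have hg : g ∈ Subgroup.closure S := by rw [hgen]; trivial
  revert x
  refine Subgroup.closure_induction
    (p := fun g _ => ∀ x : G → A, c g x = b (fun k => x (g⁻¹ * k)) * φ g * (b x)⁻¹)
    ?_ ?_ ?_ ?_ hg
  · -- generators
    intro s hs x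
    rw [hbX (fun k => x (s⁻¹ * k)), hbX x, hφ s]
    exact generator_case hsym hgen c hcoc hTM hNdef hwin KL
      (by rw [hNdef] at hh₁ ⊢; exact hh₁) s hs x
  · -- identity
    intro x
    have e : (fun k => x ((1 : G)⁻¹ * k)) = x := by
      funext k; rw [inv_one, one_mul]
    rw [hc1 x, e, map_one]
    group
  · -- products
    intro g h hgc hhc ihg ihh x
    rw [hcoc g h x, ihg (fun k => x (h⁻¹ * k)), ihh x]
    have e2 : b (fun k => (fun k' => x (h⁻¹ * k')) (g⁻¹ * k))
        = b (fun k => x ((g * h)⁻¹ * k)) := by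
      congr 1
      funext k
      show x (h⁻¹ * (g⁻¹ * k)) = x ((g * h)⁻¹ * k)
      rw [mul_inv_rev, mul_assoc]
    rw [e2, map_mul]
    group
  · -- inverses
    intro g hgc ih x
    have e1 := hcoc g g⁻¹ x
    rw [mul_inv_cancel, hc1 x] at e1
    have e2 := ih (fun k => x (g⁻¹⁻¹ * k))
    have e3 : (fun k => (fun k' => x (g⁻¹⁻¹ * k')) (g⁻¹ * k)) = x := by
      funext k
      show x (g⁻¹⁻¹ * (g⁻¹ * k)) = x k
      rw [inv_inv, mul_inv_cancel_left]
    rw [e3] at e2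
    have e4 : c g⁻¹ x = (c g (fun k => x (g⁻¹⁻¹ * k)))⁻¹ :=
      (inv_eq_of_mul_eq_one_right e1.symm).symm
    rw [e4, e2, map_inv]
    group
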